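/- The map f ↦ Ψ_K(J_K f) = (J_K f) ∘ σ_K is a linear isometric embedding of (L^∞(K), ‖·‖_A) into (C_0([0, λ(K)]), ‖·‖_∞), where ‖f‖_A = sup_{x ∈ K} |J_K f(x)|. -/

import Mathlib

open MeasureTheory Set

/-- Measure projection `π_K`. -/
noncomputable def piProj (K : Set ℝ) (x : ℝ) : ℝ :=
  (volume (Set.Icc (sInf K) x ∩ K)).toReal

/-- Left-endpoint selector `σ_K`. -/
noncomputable def sigmaSel (K : Set ℝ) (t : ℝ) : ℝ :=
  sInf {x ∈ K | piProj K x = t}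

/-- Primitive `J_K f`. -/
noncomputable def JPrim (K : Set ℝ) (f : ℝ → ℝ) (x : ℝ) : ℝ :=
  ∫ y in Set.Icc (sInf K) x ∩ K, f y

/-- The map `f ↦ (J_K f) ∘ σ_K`. -/
noncomputable def embedA (K : Set ℝ) (f : ℝ → ℝ) (t : ℝ) : ℝ :=
  JPrim K f (sigmaSel K t)

section Aux


variable {K : Set ℝ}

private lemma aux_fin (hK : IsCompact K) (x : ℝ) :
    volume (Icc (sInf K) x ∩ K) ≠ ⊤ :=
  ((measure_mono inter_subset_right).trans_lt hK.measure_lt_top).ne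

private lemma aux_split (hK : IsCompact K) {x y : ℝ} (hxy : x ≤ y) :
    Icc (sInf K) y ∩ K = (Icc (sInf K) x ∩ K) ∪ (Ioc x y ∩ K) := by
  ext z
  constructor
  · rintro ⟨⟨hz1, hz2⟩, hzK⟩
    rcases le_or_gt z x with h | h
    · exact Or.inl ⟨⟨hz1, h⟩, hzK⟩
    · exact Or.inr ⟨⟨h, hz2⟩, hzK⟩
  · rintro (⟨⟨hz1, hz2⟩, hzK⟩ | ⟨⟨hz1, hz2⟩, hzK⟩)
    · exact ⟨⟨hz1, hz2.trans hxy⟩, hzK⟩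
    · exact ⟨⟨csInf_le hK.bddBelow hzK, hz2⟩, hzK⟩

private lemma aux_disj (x y : ℝ) :
    Disjoint (Icc (sInf K) x ∩ K) (Ioc x y ∩ K) := by
  apply Set.disjoint_left.mpr
  rintro z ⟨⟨_, hz2⟩, _⟩ ⟨⟨hz3, _⟩, _⟩
  exact absurd hz2 (not_le.mpr hz3)

private lemma aux_pi_add (hK : IsCompact K) {x y : ℝ} (hxy : x ≤ y) :
    piProj K y = piProj K x + (volume (Ioc x y ∩ K)).toReal := by
  have hmK : MeasurableSet K := hK.isClosed.measurableSet
  have h1 : volume (Ioc x y ∩ K) ≠ ⊤ :=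
    ((measure_mono inter_subset_right).trans_lt hK.measure_lt_top).ne
  unfold piProj
  rw [aux_split hK hxy, measure_union (aux_disj x y) (measurableSet_Ioc.inter hmK),
    ENNReal.toReal_add (aux_fin hK x) h1]

private lemma aux_pi_mono (hK : IsCompact K) : Monotone (piProj K) := by
  intro x y h
  have := aux_pi_add hK h
  have h0 : (0:ℝ) ≤ (volume (Ioc x y ∩ K)).toReal := ENNReal.toReal_nonneg
  linarith

private lemma aux_pi_sub_le (hK : IsCompact K) {x y : ℝ} (h : x ≤ y) :
    piProj K y - piProj K x ≤ y - x := by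
  have h1 := aux_pi_add hK h
  have h2 : volume (Ioc x y ∩ K) ≤ volume (Ioc x y) := measure_mono inter_subset_left
  rw [Real.volume_Ioc] at h2
  have h3 : (volume (Ioc x y ∩ K)).toReal ≤ (ENNReal.ofReal (y - x)).toReal :=
    ENNReal.toReal_mono ENNReal.ofReal_ne_top h2
  rw [ENNReal.toReal_ofReal (by linarith)] at h3
  linarith

private lemma aux_pi_cont (hK : IsCompact K) : Continuous (piProj K) := by
  apply LipschitzWith.continuous (K := 1)
  apply LipschitzWith.of_dist_le_mul
  intro x y
  rw [NNReal.coe_one, one_mul, Real.dist_eq, Real.dist_eq]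
  rcases le_total x y with h | h
  · have h1 := aux_pi_sub_le hK h
    have h2 := aux_pi_mono hK h
    rw [abs_sub_comm, abs_sub_comm x, abs_of_nonneg (by linarith), abs_of_nonneg (by linarith)]
    linarith
  · have h1 := aux_pi_sub_le hK h
    have h2 := aux_pi_mono hK h
    rw [abs_of_nonneg (by linarith), abs_of_nonneg (by linarith)]
    linarith

private lemma aux_pi_inf : piProj K (sInf K) = 0 := by
  have h0 : volume (Icc (sInf K) (sInf K) ∩ K) = 0 :=
    measure_mono_null (by rw [Icc_self]; exact inter_subset_left) Real.volume_singleton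
  unfold piProj
  rw [h0]
  simp

private lemma aux_pi_sSup (hK : IsCompact K) (hne : K.Nonempty) :
    piProj K (sSup K) = (volume K).toReal := by
  unfold piProj
  have h : Icc (sInf K) (sSup K) ∩ K = K :=
    Set.inter_eq_right.mpr (fun x hx => ⟨csInf_le hK.bddBelow hx, le_csSup hK.bddAbove hx⟩)
  rw [h]

private lemma aux_level (hK : IsCompact K) (hne : K.Nonempty) {t : ℝ}
    (ht : t ∈ Icc (0:ℝ) (volume K).toReal) : ∃ x ∈ K, piProj K x = t := by
  have hab : sInf K ≤ sSup K := csInf_le_csSup hne hK.bddBelow hK.bddAbove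
  have hmem : t ∈ Icc (piProj K (sInf K)) (piProj K (sSup K)) := by
    rw [aux_pi_inf, aux_pi_sSup hK hne]; exact ht
  obtain ⟨c, hc, hct⟩ := intermediate_value_Icc hab (aux_pi_cont hK).continuousOn hmem
  have haK : sInf K ∈ K := hK.isClosed.csInf_mem hne hK.bddBelow
  set x := sSup (K ∩ Iic c) with hx
  have hne2 : (K ∩ Iic c).Nonempty := ⟨sInf K, haK, hc.1⟩
  have hcl : IsClosed (K ∩ Iic c) := hK.isClosed.inter isClosed_Iic
  have hbd : BddAbove (K ∩ Iic c) := hK.bddAbove.mono inter_subset_left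
  have hxm : x ∈ K ∩ Iic c := hcl.csSup_mem hne2 hbd
  refine ⟨x, hxm.1, ?_⟩
  have hxc : x ≤ c := hxm.2
  have hempty : Ioc x c ∩ K = ∅ := by
    ext z
    simp only [mem_inter_iff, mem_Ioc, mem_empty_iff_false, iff_false]
    rintro ⟨⟨hz1, hz2⟩, hzK⟩
    exact absurd (le_csSup hbd ⟨hzK, hz2⟩) (not_le.mpr hz1)
  have := aux_pi_add hK hxc
  rw [hempty] at this
  simp at this
  rw [← this]
  exact hct

private lemma aux_sigma (hK : IsCompact K) (hne : K.Nonempty) {t : ℝ}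
    (ht : t ∈ Icc (0:ℝ) (volume K).toReal) :
    sigmaSel K t ∈ K ∧ piProj K (sigmaSel K t) = t := by
  have hset : {x ∈ K | piProj K x = t} = K ∩ (piProj K) ⁻¹' {t} := by
    ext x; simp [Set.mem_preimage]
  have hcl : IsClosed {x ∈ K | piProj K x = t} := by
    rw [hset]
    exact hK.isClosed.inter (isClosed_singleton.preimage (aux_pi_cont hK))
  have hne2 : {x ∈ K | piProj K x = t}.Nonempty := by
    obtain ⟨x, hx, hxt⟩ := aux_level hK hne ht
    exact ⟨x, hx, hxt⟩
  have hbd : BddBelow {x ∈ K | piProj K x = t} := hK.bddBelow.mono (fun x hx => hx.1)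
  have := hcl.csInf_mem hne2 hbd
  exact ⟨this.1, this.2⟩

private lemma aux_int_bound (hK : IsCompact K) {f : ℝ → ℝ} {C : ℝ}
    (hC : ∀ᵐ x ∂volume.restrict K, ‖f x‖ ≤ C) {s : Set ℝ} (hs : s ⊆ K) :
    |∫ y in s, f y| ≤ C * (volume s).toReal := by
  rw [← Real.norm_eq_abs]
  exact norm_setIntegral_le_of_norm_le_const_ae ((measure_mono hs).trans_lt hK.measure_lt_top)
    (ae_restrict_of_ae_restrict_of_subset hs hC)

private lemma aux_J_add (hK : IsCompact K) {f : ℝ → ℝ}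
    (hint : IntegrableOn f K volume) {x y : ℝ} (hxy : x ≤ y) :
    JPrim K f y = JPrim K f x + ∫ z in Ioc x y ∩ K, f z := by
  unfold JPrim
  rw [aux_split hK hxy,
    setIntegral_union (aux_disj x y) (measurableSet_Ioc.inter hK.isClosed.measurableSet)
      (hint.mono_set inter_subset_right) (hint.mono_set inter_subset_right)]

private lemma aux_J_diff (hK : IsCompact K) {f : ℝ → ℝ} {C : ℝ}
    (hint : IntegrableOn f K volume)
    (hC : ∀ᵐ x ∂volume.restrict K, ‖f x‖ ≤ C) {x y : ℝ} (hxy : x ≤ y) :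
    |JPrim K f y - JPrim K f x| ≤ C * (piProj K y - piProj K x) := by
  have h1 := aux_J_add hK hint hxy
  have h2 := aux_pi_add hK hxy
  have h3 := aux_int_bound hK hC (s := Ioc x y ∩ K) inter_subset_right
  have h4 : piProj K y - piProj K x = (volume (Ioc x y ∩ K)).toReal := by linarith
  rw [h1, add_sub_cancel_left, h4]
  exact h3

private lemma aux_J_fiber (hK : IsCompact K) {f : ℝ → ℝ} {C : ℝ}
    (hint : IntegrableOn f K volume)
    (hC : ∀ᵐ x ∂volume.restrict K, ‖f x‖ ≤ C) {x y : ℝ} (hxy : x ≤ y)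
    (hpi : piProj K x = piProj K y) : JPrim K f x = JPrim K f y := by
  have h := aux_J_diff hK hint hC hxy
  rw [hpi] at h
  simp only [sub_self, mul_zero] at h
  have h2 : JPrim K f y - JPrim K f x = 0 := abs_nonpos_iff.mp h
  linarith

private lemma aux_sigma_mono (hK : IsCompact K) (hne : K.Nonempty) {s t : ℝ}
    (hs : s ∈ Icc (0:ℝ) (volume K).toReal) (ht : t ∈ Icc (0:ℝ) (volume K).toReal)
    (hst : s ≤ t) : sigmaSel K s ≤ sigmaSel K t := by
  by_contra h
  have hlt : sigmaSel K t < sigmaSel K s := not_le.mp h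
  have h1 : t ≤ s := by
    have := aux_pi_mono hK hlt.le
    rwa [(aux_sigma hK hne ht).2, (aux_sigma hK hne hs).2] at this
  rw [le_antisymm hst h1] at hlt
  exact lt_irrefl _ hlt

private lemma aux_setup (hK : IsCompact K) {f : ℝ → ℝ}
    (hf : MemLp f ⊤ (volume.restrict K)) :
    IntegrableOn f K volume ∧
      ∀ᵐ x ∂volume.restrict K, ‖f x‖ ≤ (eLpNormEssSup f (volume.restrict K)).toReal := by
  haveI : IsFiniteMeasure (volume.restrict K) :=
    ⟨by rw [Measure.restrict_apply_univ]; exact hK.measure_lt_top⟩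
  constructor
  · exact memLp_one_iff_integrable.mp (hf.mono_exponent le_top)
  · have hfin : eLpNormEssSup f (volume.restrict K) ≠ ⊤ := by
      have := hf.2
      rwa [eLpNorm_exponent_top, lt_top_iff_ne_top] at this
    filter_upwards [ae_le_eLpNormEssSup (f := f) (μ := volume.restrict K)] with x hx
    have := ENNReal.toReal_mono hfin hx
    simpa using this

end Aux

theorem stmt11 (K : Set ℝ) (hK : IsCompact K) (hpos : 0 < volume K) :
    -- lands in C_0([0, λ(K)])
    (∀ f : ℝ → ℝ, Measurable f → MemLp f ⊤ (volume.restrict K) →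
      ContinuousOn (embedA K f) (Set.Icc (0 : ℝ) (volume K).toReal) ∧
      embedA K f 0 = 0) ∧
    -- linearity
    (∀ f g : ℝ → ℝ, Measurable f → Measurable g →
      MemLp f ⊤ (volume.restrict K) → MemLp g ⊤ (volume.restrict K) →
      ∀ c : ℝ, ∀ t ∈ Set.Icc (0 : ℝ) (volume K).toReal,
        embedA K (f + g) t = embedA K f t + embedA K g t ∧
        embedA K (c • f) t = c * embedA K f t) ∧
    -- isometry: sup norm of the image equals the Alexiewicz norm of `f`
    (∀ f : ℝ → ℝ, Measurable f → MemLp f ⊤ (volume.restrict K) →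
      (⨆ t ∈ Set.Icc (0 : ℝ) (volume K).toReal, |embedA K f t|) =
        ⨆ x ∈ K, |JPrim K f x|) := by
  have hne : K.Nonempty := by
    rcases K.eq_empty_or_nonempty with h | h
    · rw [h] at hpos; simp at hpos
    · exact h
  refine ⟨?_, ?_, ?_⟩
  · -- continuity and vanishing at 0
    intro f hfm hf
    obtain ⟨hint, hC⟩ := aux_setup hK hf
    set C := (eLpNormEssSup f (volume.restrict K)).toReal with hCdef
    have hC0 : 0 ≤ C := ENNReal.toReal_nonneg
    constructor
    · have hlip : LipschitzOnWith C.toNNReal (embedA K f)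
          (Icc (0:ℝ) (volume K).toReal) := by
        apply LipschitzOnWith.of_dist_le_mul
        intro s hs t ht
        have key : ∀ u v : ℝ, u ∈ Icc (0:ℝ) (volume K).toReal →
            v ∈ Icc (0:ℝ) (volume K).toReal → u ≤ v →
            |embedA K f v - embedA K f u| ≤ C * (v - u) := by
          intro u v hu hv huv
          have hσ := aux_sigma_mono hK hne hu hv huv
          have h := aux_J_diff hK hint hC hσ
          rwa [(aux_sigma hK hne hv).2, (aux_sigma hK hne hu).2] at h
        rw [Real.dist_eq, Real.dist_eq, Real.coe_toNNReal C hC0]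
        rcases le_total s t with h | h
        · rw [abs_sub_comm (embedA K f s), abs_sub_comm s, abs_of_nonneg (sub_nonneg.2 h)]
          exact key s t hs ht h
        · rw [abs_of_nonneg (sub_nonneg.2 h)]
          exact key t s ht hs h
      exact hlip.continuousOn
    · have h0 : (0:ℝ) ∈ Icc (0:ℝ) (volume K).toReal := ⟨le_refl _, ENNReal.toReal_nonneg⟩
      have hσ := aux_sigma hK hne h0
      have hnull : volume (Icc (sInf K) (sigmaSel K 0) ∩ K) = 0 := by
        have h2 := hσ.2
        unfold piProj at h2
        rcases (ENNReal.toReal_eq_zero_iff _).mp h2 with h | h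
        · exact h
        · exact absurd h (aux_fin hK _)
      unfold embedA JPrim
      rw [Measure.restrict_eq_zero.mpr hnull]
      exact integral_zero_measure f
  · -- linearity
    intro f g hfm hgm hf hg c t ht
    obtain ⟨hintf, -⟩ := aux_setup hK hf
    obtain ⟨hintg, -⟩ := aux_setup hK hg
    have hfs : IntegrableOn f (Icc (sInf K) (sigmaSel K t) ∩ K) volume :=
      hintf.mono_set inter_subset_right
    have hgs : IntegrableOn g (Icc (sInf K) (sigmaSel K t) ∩ K) volume :=
      hintg.mono_set inter_subset_right
    constructor
    · simp only [embedA, JPrim, Pi.add_apply]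
      exact integral_add hfs hgs
    · simp only [embedA, JPrim, Pi.smul_apply, smul_eq_mul]
      exact integral_const_mul c _
  · -- isometry
    intro f hfm hf
    obtain ⟨hint, hC⟩ := aux_setup hK hf
    set C := (eLpNormEssSup f (volume.restrict K)).toReal with hCdef
    have hC0 : 0 ≤ C := ENNReal.toReal_nonneg
    have hM0 : 0 ≤ C * (volume K).toReal := mul_nonneg hC0 ENNReal.toReal_nonneg
    have hB : ∀ x, |JPrim K f x| ≤ C * (volume K).toReal := by
      intro x
      have h1 := aux_int_bound hK hC (s := Icc (sInf K) x ∩ K) inter_subset_right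
      have h2 : (volume (Icc (sInf K) x ∩ K)).toReal ≤ (volume K).toReal :=
        ENNReal.toReal_mono hK.measure_lt_top.ne (measure_mono inter_subset_right)
      exact h1.trans (mul_le_mul_of_nonneg_left h2 hC0)
    have hA : ∀ t, |embedA K f t| ≤ C * (volume K).toReal := fun t => hB _
    have hbddB : BddAbove (Set.range fun x => ⨆ _ : x ∈ K, |JPrim K f x|) := by
      refine ⟨C * (volume K).toReal, ?_⟩
      rintro _ ⟨x, rfl⟩
      exact Real.iSup_le (fun _ => hB x) hM0
    have hbddA : BddAbove (Set.range fun t =>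
        ⨆ _ : t ∈ Icc (0:ℝ) (volume K).toReal, |embedA K f t|) := by
      refine ⟨C * (volume K).toReal, ?_⟩
      rintro _ ⟨t, rfl⟩
      exact Real.iSup_le (fun _ => hA t) hM0
    have hRHS0 : (0:ℝ) ≤ ⨆ x, ⨆ _ : x ∈ K, |JPrim K f x| :=
      Real.iSup_nonneg fun x => Real.iSup_nonneg fun _ => abs_nonneg _
    have hLHS0 : (0:ℝ) ≤ ⨆ t, ⨆ _ : t ∈ Icc (0:ℝ) (volume K).toReal, |embedA K f t| :=
      Real.iSup_nonneg fun t => Real.iSup_nonneg fun _ => abs_nonneg _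
    apply le_antisymm
    · apply Real.iSup_le _ hRHS0
      intro t
      apply Real.iSup_le _ hRHS0
      intro ht
      have hσ := aux_sigma hK hne ht
      calc |embedA K f t| = ⨆ _ : sigmaSel K t ∈ K, |JPrim K f (sigmaSel K t)| :=
            (ciSup_pos (f := fun _ => |JPrim K f (sigmaSel K t)|) hσ.1).symm
        _ ≤ ⨆ x, ⨆ _ : x ∈ K, |JPrim K f x| := le_ciSup hbddB (sigmaSel K t)
    · apply Real.iSup_le _ hLHS0
      intro x
      apply Real.iSup_le _ hLHS0
      intro hx
      have ht : piProj K x ∈ Icc (0:ℝ) (volume K).toReal :=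
        ⟨ENNReal.toReal_nonneg,
          ENNReal.toReal_mono hK.measure_lt_top.ne (measure_mono inter_subset_right)⟩
      have hσ := aux_sigma hK hne ht
      have hσx : sigmaSel K (piProj K x) ≤ x :=
        csInf_le (hK.bddBelow.mono (fun y hy => hy.1)) ⟨hx, rfl⟩
      have hkey : JPrim K f x = embedA K f (piProj K x) :=
        (aux_J_fiber hK hint hC hσx (by rw [hσ.2])).symm
      calc |JPrim K f x| = |embedA K f (piProj K x)| := by rw [hkey]
        _ = ⨆ _ : piProj K x ∈ Icc (0:ℝ) (volume K).toReal, |embedA K f (piProj K x)| :=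
            (ciSup_pos (f := fun _ => |embedA K f (piProj K x)|) ht).symm
        _ ≤ _ := le_ciSup hbddA (piProj K x)
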